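/- For each k ∈ (0,1), the function k ↦ K'(k)/K(k) is differentiable at k with derivative d/dk (K'(k)/K(k)) = −π/(2 k k'² K(k)²), where k' = √(1−k²). -/

import Mathlib

open Real

/-- Complete elliptic integral of the first kind. -/
noncomputable def EllK (k : ℝ) : ℝ :=
  ∫ θ in (0:ℝ)..(π/2), 1 / Real.sqrt (1 - k^2 * Real.sin θ ^ 2)

/-- Complete elliptic integral of the second kind. -/
noncomputable def EllE (k : ℝ) : ℝ :=
  ∫ θ in (0:ℝ)..(π/2), Real.sqrt (1 - k^2 * Real.sin θ ^ 2)

/-- Complementary complete elliptic integral `K'(k) = K(√(1-k²))`. -/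
noncomputable def EllK' (k : ℝ) : ℝ := EllK (Real.sqrt (1 - k^2))

/-- Complementary elliptic integral of the second kind `E'(k) = E(√(1-k²))`. -/
noncomputable def EllE' (k : ℝ) : ℝ := EllE (Real.sqrt (1 - k^2))

/-- The nome `q = exp(-π K'(k)/K(k))`. -/
noncomputable def nome (k : ℝ) : ℝ := Real.exp (-π * EllK' k / EllK k)

/-- Jacobi's theta function `Θ(u,k) = 1 + 2 ∑_{n≥1} (-1)^n q^{n²} cos(nπu/K)`. -/
noncomputable def JTheta (u k : ℝ) : ℝ :=
  1 + 2 * ∑' n : ℕ, (-1 : ℝ)^(n+1) * nome k ^ ((n+1)^2) *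
    Real.cos (((n:ℝ)+1) * π * u / EllK k)

/-- Jacobi's theta function `H(u,k) = 2 ∑_{n≥0} (-1)^n q^{(n+1/2)²} sin((2n+1)πu/(2K))`. -/
noncomputable def JH (u k : ℝ) : ℝ :=
  2 * ∑' n : ℕ, (-1 : ℝ)^n * nome k ^ ((((n:ℝ) + 1/2)^2)) *
    Real.sin ((2*(n:ℝ)+1) * π * u / (2 * EllK k))

/-- Jacobi's theta function `H₁(u,k) = 2 ∑_{n≥0} q^{(n+1/2)²} cos((2n+1)πu/(2K))`. -/
noncomputable def JH1 (u k : ℝ) : ℝ :=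
  2 * ∑' n : ℕ, nome k ^ ((((n:ℝ) + 1/2)^2)) *
    Real.cos ((2*(n:ℝ)+1) * π * u / (2 * EllK k))

/-- Jacobi's theta function `Θ₁(u,k) = 1 + 2 ∑_{n≥1} q^{n²} cos(nπu/K)`. -/
noncomputable def JTheta1 (u k : ℝ) : ℝ :=
  1 + 2 * ∑' n : ℕ, nome k ^ ((n+1)^2) * Real.cos (((n:ℝ)+1) * π * u / EllK k)

/-- Jacobi's zeta function `zn(u,k) = Θ_u(u,k)/Θ(u,k)`. -/
noncomputable def zn (u k : ℝ) : ℝ := deriv (fun v => JTheta v k) u / JTheta u k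

/-- Jacobi's elliptic sine `sn(u,k) = H(u,k)/(√k Θ(u,k))`. -/
noncomputable def sn (u k : ℝ) : ℝ := JH u k / (Real.sqrt k * JTheta u k)

/-- Jacobi's elliptic cosine `cn(u,k) = √(k'/k) H₁(u,k)/Θ(u,k)`. -/
noncomputable def cn (u k : ℝ) : ℝ :=
  Real.sqrt (Real.sqrt (1 - k^2) / k) * JH1 u k / JTheta u k

/-- Jacobi's delta amplitude `dn(u,k) = √(k') Θ₁(u,k)/Θ(u,k)`. -/
noncomputable def dn (u k : ℝ) : ℝ :=
  Real.sqrt (Real.sqrt (1 - k^2)) * JTheta1 u k / JTheta u k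


section ellAux
open MeasureTheory intervalIntegral Metric

lemma u_pos {k : ℝ} (hk : k^2 < 1) (θ : ℝ) : 0 < 1 - k^2 * Real.sin θ^2 := by
  nlinarith [Real.sin_sq_le_one θ, sq_nonneg k, sq_nonneg (Real.sin θ)]

lemma contDelta {k : ℝ} : Continuous fun θ : ℝ => Real.sqrt (1 - k^2 * Real.sin θ^2) := by
  fun_prop

lemma contInv {k : ℝ} (hk : k^2 < 1) :
    Continuous fun θ : ℝ => 1 / Real.sqrt (1 - k^2 * Real.sin θ^2) :=
  continuous_const.div contDelta (fun θ => (Real.sqrt_pos.2 (u_pos hk θ)).ne')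

lemma contInv3 {k : ℝ} (hk : k^2 < 1) :
    Continuous fun θ : ℝ => 1 / Real.sqrt (1 - k^2 * Real.sin θ^2)^3 :=
  continuous_const.div (contDelta.pow 3)
    (fun θ => pow_ne_zero 3 (Real.sqrt_pos.2 (u_pos hk θ)).ne')

lemma hasDerivAt_Delta {x s : ℝ} (h : 0 < 1 - x^2*s^2) :
    HasDerivAt (fun y => Real.sqrt (1 - y^2*s^2)) (-(x*s^2) / Real.sqrt (1 - x^2*s^2)) x := by
  have h1 : HasDerivAt (fun y : ℝ => 1 - y^2*s^2) (-(2*x*s^2)) x := by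
    simpa using (((hasDerivAt_pow 2 x).mul_const (s^2)).const_sub 1)
  have h2 := (Real.hasDerivAt_sqrt h.ne').comp x h1
  refine HasDerivAt.congr_deriv h2 ?_
  have hs : Real.sqrt (1 - x^2*s^2) > 0 := Real.sqrt_pos.2 h
  field_simp

lemma hasDerivAt_invDelta {x s : ℝ} (h : 0 < 1 - x^2*s^2) :
    HasDerivAt (fun y => 1 / Real.sqrt (1 - y^2*s^2))
      (x*s^2 / Real.sqrt (1 - x^2*s^2)^3) x := by
  have hs : Real.sqrt (1 - x^2*s^2) > 0 := Real.sqrt_pos.2 h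
  have h2 := (hasDerivAt_Delta h).inv hs.ne'
  have hsq : Real.sqrt (1 - x^2*s^2)^2 = 1 - x^2*s^2 := Real.sq_sqrt h.le
  simp only [one_div]
  refine HasDerivAt.congr_deriv h2 ?_
  rw [show (3:ℕ) = 2 + 1 by norm_num, pow_succ]
  field_simp

lemma hasDerivAt_G {k : ℝ} (hk : k^2 < 1) (θ : ℝ) :
    HasDerivAt (fun t => Real.sin t * Real.cos t / Real.sqrt (1 - k^2 * Real.sin t^2))
      ((Real.cos θ^2 - Real.sin θ^2) / Real.sqrt (1 - k^2 * Real.sin θ^2)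
        + k^2 * Real.sin θ^2 * Real.cos θ^2 / Real.sqrt (1 - k^2 * Real.sin θ^2)^3) θ := by
  have hu := u_pos hk θ
  have hs : Real.sqrt (1 - k^2 * Real.sin θ^2) > 0 := Real.sqrt_pos.2 hu
  have hsq : Real.sqrt (1 - k^2 * Real.sin θ^2)^2 = 1 - k^2 * Real.sin θ^2 :=
    Real.sq_sqrt hu.le
  have h1 : HasDerivAt (fun t => Real.sin t * Real.cos t)
      (Real.cos θ * Real.cos θ + Real.sin θ * (-Real.sin θ)) θ :=
    (Real.hasDerivAt_sin θ).mul (Real.hasDerivAt_cos θ)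
  have h2 : HasDerivAt (fun t : ℝ => 1 - k^2 * Real.sin t^2)
      (-(k^2 * (2 * Real.sin θ * Real.cos θ))) θ := by
    have := ((((Real.hasDerivAt_sin θ).pow 2)).const_mul (k^2)).const_sub 1
    simpa [mul_comm, mul_assoc, mul_left_comm] using this
  have h3 : HasDerivAt (fun t => Real.sqrt (1 - k^2 * Real.sin t^2))
      (1 / (2 * Real.sqrt (1 - k^2 * Real.sin θ^2)) * -(k^2 * (2 * Real.sin θ * Real.cos θ))) θ :=
    (Real.hasDerivAt_sqrt hu.ne').comp θ h2
  have h4 := h1.div h3 hs.ne'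
  refine HasDerivAt.congr_deriv h4 ?_
  field_simp
  linear_combination ((-2*Real.sqrt (1 - k^2*Real.sin θ^2)^2) *
    ((Real.cos θ^2 - Real.sin θ^2) * Real.sqrt (1 - k^2*Real.sin θ^2)^2
      + k^2*Real.sin θ^2*Real.cos θ^2) + ((2)*Real.sqrt (1 - k^2*Real.sin θ^2)^4*Real.cos θ^2*Real.sin θ^0*k^0 + (-2)*Real.sqrt (1 - k^2*Real.sin θ^2)^4*Real.cos θ^0*Real.sin θ^2*k^0 + (2)*Real.sqrt (1 - k^2*Real.sin θ^2)^2*Real.cos θ^2*Real.sin θ^2*k^2)) * hsq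

lemma contG {k : ℝ} (hk : k^2 < 1) : Continuous fun θ : ℝ =>
    ((Real.cos θ^2 - Real.sin θ^2) / Real.sqrt (1 - k^2 * Real.sin θ^2)
      + k^2 * Real.sin θ^2 * Real.cos θ^2 / Real.sqrt (1 - k^2 * Real.sin θ^2)^3) := by
  apply Continuous.add
  · exact ((Real.continuous_cos.pow 2).sub (Real.continuous_sin.pow 2)).div contDelta
      (fun θ => (Real.sqrt_pos.2 (u_pos hk θ)).ne')
  · exact ((continuous_const.mul (Real.continuous_sin.pow 2)).mul (Real.continuous_cos.pow 2)).div
      (contDelta.pow 3) (fun θ => pow_ne_zero _ (Real.sqrt_pos.2 (u_pos hk θ)).ne')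

lemma integral_G_deriv {k : ℝ} (hk : k^2 < 1) :
    ∫ θ in (0:ℝ)..(π/2), ((Real.cos θ^2 - Real.sin θ^2) / Real.sqrt (1 - k^2 * Real.sin θ^2)
        + k^2 * Real.sin θ^2 * Real.cos θ^2 / Real.sqrt (1 - k^2 * Real.sin θ^2)^3) = 0 := by
  have := intervalIntegral.integral_eq_sub_of_hasDerivAt
    (f := fun t => Real.sin t * Real.cos t / Real.sqrt (1 - k^2 * Real.sin t^2))
    (fun θ _ => hasDerivAt_G hk θ) ((contG hk).intervalIntegrable 0 (π/2))
  rw [this]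
  simp

lemma pointwise_inv3 {k : ℝ} (hk : k^2 < 1) (θ : ℝ) :
    1 / Real.sqrt (1 - k^2 * Real.sin θ^2)^3
      = Real.sqrt (1 - k^2 * Real.sin θ^2) / (1 - k^2)
        - (k^2/(1-k^2)) * ((Real.cos θ^2 - Real.sin θ^2) / Real.sqrt (1 - k^2 * Real.sin θ^2)
          + k^2 * Real.sin θ^2 * Real.cos θ^2 / Real.sqrt (1 - k^2 * Real.sin θ^2)^3) := by
  have hu := u_pos hk θ
  have hs : Real.sqrt (1 - k^2 * Real.sin θ^2) > 0 := Real.sqrt_pos.2 hu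
  have hsq : Real.sqrt (1 - k^2 * Real.sin θ^2)^2 = 1 - k^2 * Real.sin θ^2 :=
    Real.sq_sqrt hu.le
  have hc : Real.cos θ^2 = 1 - Real.sin θ^2 := by
    have := Real.sin_sq_add_cos_sq θ; linarith
  have hk2 : (1:ℝ) - k^2 ≠ 0 := by nlinarith
  rw [hc]
  field_simp
  linear_combination (((1-k^2) * (-(Real.sqrt (1 - k^2*Real.sin θ^2)^6
      + Real.sqrt (1 - k^2*Real.sin θ^2)^4*(1 - k^2*Real.sin θ^2)
      + Real.sqrt (1 - k^2*Real.sin θ^2)^2*(1 - k^2*Real.sin θ^2)^2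
      + (1 - k^2*Real.sin θ^2)^3)
    + k^2*(1-2*Real.sin θ^2)*(Real.sqrt (1 - k^2*Real.sin θ^2)^4
      + Real.sqrt (1 - k^2*Real.sin θ^2)^2*(1 - k^2*Real.sin θ^2) + (1 - k^2*Real.sin θ^2)^2)
    + ((1-k^2)+k^4*Real.sin θ^2*(1-Real.sin θ^2))*(Real.sqrt (1 - k^2*Real.sin θ^2)^2
      + (1 - k^2*Real.sin θ^2)))) + ((-1)*Real.sqrt (1 - k^2*Real.sin θ^2)^6*k^2*Real.sin θ^0 + (1)*Real.sqrt (1 - k^2*Real.sin θ^2)^6*k^0*Real.sin θ^0 + (-2)*Real.sqrt (1 - k^2*Real.sin θ^2)^4*k^2*Real.sin θ^0 + (1)*Real.sqrt (1 - k^2*Real.sin θ^2)^4*k^2*Real.sin θ^2 + (1)*Real.sqrt (1 - k^2*Real.sin θ^2)^4*k^4*Real.sin θ^0 + (-1)*Real.sqrt (1 - k^2*Real.sin θ^2)^4*k^4*Real.sin θ^2 + (1)*Real.sqrt (1 - k^2*Real.sin θ^2)^4*k^0*Real.sin θ^0 + (-1)*Real.sqrt (1 - k^2*Real.sin θ^2)^2*k^0*Real.sin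 θ^0 + (1)*Real.sqrt (1 - k^2*Real.sin θ^2)^0*k^2*Real.sin θ^0 + (-1)*Real.sqrt (1 - k^2*Real.sin θ^2)^0*k^2*Real.sin θ^2 + (-1)*Real.sqrt (1 - k^2*Real.sin θ^2)^0*k^0*Real.sin θ^0)) * hsq

end ellAux

section ellMain
open MeasureTheory intervalIntegral Metric

lemma integral_inv3 {k : ℝ} (hk : k^2 < 1) :
    ∫ θ in (0:ℝ)..(π/2), 1 / Real.sqrt (1 - k^2*Real.sin θ^2)^3 = EllE k / (1 - k^2) := by
  have h1 : (∫ θ in (0:ℝ)..(π/2), 1 / Real.sqrt (1 - k^2*Real.sin θ^2)^3)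
      = ∫ θ in (0:ℝ)..(π/2), (Real.sqrt (1 - k^2 * Real.sin θ^2) / (1 - k^2)
        - (k^2/(1-k^2)) * ((Real.cos θ^2 - Real.sin θ^2) / Real.sqrt (1 - k^2 * Real.sin θ^2)
          + k^2 * Real.sin θ^2 * Real.cos θ^2 / Real.sqrt (1 - k^2 * Real.sin θ^2)^3)) :=
    intervalIntegral.integral_congr (fun θ _ => pointwise_inv3 hk θ)
  rw [h1, intervalIntegral.integral_sub
      ((contDelta.div_const _).intervalIntegrable _ _)
      (((contG hk).intervalIntegrable _ _).const_mul _),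
    intervalIntegral.integral_div, intervalIntegral.integral_const_mul, integral_G_deriv hk]
  simp [EllE]

lemma EllK_sub_EllE {k : ℝ} (hk : k^2 < 1) :
    (∫ θ in (0:ℝ)..(π/2), k^2 * Real.sin θ^2 / Real.sqrt (1 - k^2*Real.sin θ^2))
      = EllK k - EllE k := by
  rw [EllK, EllE, ← intervalIntegral.integral_sub ((contInv hk).intervalIntegrable _ _)
    (contDelta.intervalIntegrable _ _)]
  apply intervalIntegral.integral_congr
  intro θ _
  have hu := u_pos hk θ
  have hs : Real.sqrt (1 - k^2 * Real.sin θ^2) > 0 := Real.sqrt_pos.2 hu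
  have hsq : Real.sqrt (1 - k^2 * Real.sin θ^2)^2 = 1 - k^2 * Real.sin θ^2 :=
    Real.sq_sqrt hu.le
  field_simp
  linarith

lemma hasDerivAt_EllK_int {k : ℝ} (hk : k ∈ Set.Ioo (0:ℝ) 1) :
    HasDerivAt EllK
      (∫ θ in (0:ℝ)..(π/2), k * Real.sin θ^2 / Real.sqrt (1 - k^2 * Real.sin θ^2)^3) k := by
  obtain ⟨hk0, hk1⟩ := hk
  set b : ℝ := (1 + k) / 2 with hb
  have hb1 : b < 1 := by simp [hb]; linarith
  have hb0 : 0 < b := by positivity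
  have hε : (0:ℝ) < (1 - k)/2 := by linarith
  have hball : ∀ x ∈ ball k ((1-k)/2), |x| ≤ b ∧ x^2 < 1 := by
    intro x hx
    rw [mem_ball, Real.dist_eq] at hx
    have h1 : |x| ≤ b := by
      rw [abs_lt] at hx; rw [abs_le]; constructor <;> [linarith; linarith]
    exact ⟨h1, by nlinarith [abs_nonneg x, sq_abs x]⟩
  have key := hasDerivAt_integral_of_dominated_loc_of_deriv_le (F := fun x θ =>
      1 / Real.sqrt (1 - x^2 * Real.sin θ^2))
    (F' := fun x θ => x * Real.sin θ^2 / Real.sqrt (1 - x^2 * Real.sin θ^2)^3)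
    (bound := fun _ => b / Real.sqrt (1 - b^2)^3) (a := (0:ℝ)) (b := π/2)
    (μ := volume) (x₀ := k) (ball_mem_nhds k hε) ?_ ?_ ?_ ?_ ?_ ?_
  · exact key.2
  · filter_upwards with x
    exact ((measurable_const.div contDelta.measurable).aestronglyMeasurable).restrict
  · exact (contInv (by nlinarith)).intervalIntegrable _ _
  · have hk2 : k^2 < 1 := by nlinarith
    exact (((continuous_const.mul (Real.continuous_sin.pow 2)).div (contDelta.pow 3)
      (fun θ => pow_ne_zero _ (Real.sqrt_pos.2 (u_pos hk2 θ)).ne')).aestronglyMeasurable).restrict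
  · filter_upwards with θ _ x hx
    obtain ⟨hxb, hx1⟩ := hball x hx
    have hu : 0 < 1 - x^2 * Real.sin θ^2 := u_pos hx1 θ
    have hxb2 : x^2 ≤ b^2 := by nlinarith [sq_abs x, abs_nonneg x]
    have hub : 1 - b^2 ≤ 1 - x^2 * Real.sin θ^2 := by
      nlinarith [Real.sin_sq_le_one θ, sq_nonneg (Real.sin θ), sq_nonneg x]
    have hb2 : (0:ℝ) < 1 - b^2 := by nlinarith
    have hsq : Real.sqrt (1 - b^2) ≤ Real.sqrt (1 - x^2 * Real.sin θ^2) :=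
      Real.sqrt_le_sqrt hub
    have hsqb : 0 < Real.sqrt (1 - b^2) := Real.sqrt_pos.2 hb2
    rw [Real.norm_eq_abs, abs_div]
    apply div_le_div₀ (by positivity)
    · rw [abs_mul]
      calc |x| * |Real.sin θ^2| ≤ b * 1 := by
            apply mul_le_mul hxb _ (abs_nonneg _) hb0.le
            rw [abs_of_nonneg (sq_nonneg _)]; exact Real.sin_sq_le_one θ
        _ = b := mul_one b
    · positivity
    · rw [abs_of_nonneg (by positivity)]
      exact pow_le_pow_left₀ hsqb.le hsq 3
  · exact intervalIntegrable_const
  · filter_upwards with θ _ x hx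
    exact hasDerivAt_invDelta (u_pos (hball x hx).2 θ)

lemma hasDerivAt_EllE_int {k : ℝ} (hk : k ∈ Set.Ioo (0:ℝ) 1) :
    HasDerivAt EllE
      (∫ θ in (0:ℝ)..(π/2), -(k * Real.sin θ^2) / Real.sqrt (1 - k^2 * Real.sin θ^2)) k := by
  obtain ⟨hk0, hk1⟩ := hk
  set b : ℝ := (1 + k) / 2 with hb
  have hb1 : b < 1 := by simp [hb]; linarith
  have hb0 : 0 < b := by positivity
  have hε : (0:ℝ) < (1 - k)/2 := by linarith
  have hball : ∀ x ∈ ball k ((1-k)/2), |x| ≤ b ∧ x^2 < 1 := by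
    intro x hx
    rw [mem_ball, Real.dist_eq] at hx
    have h1 : |x| ≤ b := by
      rw [abs_lt] at hx; rw [abs_le]; constructor <;> [linarith; linarith]
    exact ⟨h1, by nlinarith [abs_nonneg x, sq_abs x]⟩
  have key := hasDerivAt_integral_of_dominated_loc_of_deriv_le (F := fun x θ =>
      Real.sqrt (1 - x^2 * Real.sin θ^2))
    (F' := fun x θ => -(x * Real.sin θ^2) / Real.sqrt (1 - x^2 * Real.sin θ^2))
    (bound := fun _ => b / Real.sqrt (1 - b^2)) (a := (0:ℝ)) (b := π/2)
    (μ := volume) (x₀ := k) (ball_mem_nhds k hε) ?_ ?_ ?_ ?_ ?_ ?_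
  · exact key.2
  · filter_upwards with x
    exact contDelta.aestronglyMeasurable.restrict
  · exact contDelta.intervalIntegrable _ _
  · have hk2 : k^2 < 1 := by nlinarith
    exact (((continuous_const.mul (Real.continuous_sin.pow 2)).neg.div contDelta
      (fun θ => (Real.sqrt_pos.2 (u_pos hk2 θ)).ne')).aestronglyMeasurable).restrict
  · filter_upwards with θ _ x hx
    obtain ⟨hxb, hx1⟩ := hball x hx
    have hu : 0 < 1 - x^2 * Real.sin θ^2 := u_pos hx1 θ
    have hxb2 : x^2 ≤ b^2 := by nlinarith [sq_abs x, abs_nonneg x]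
    have hub : 1 - b^2 ≤ 1 - x^2 * Real.sin θ^2 := by
      nlinarith [Real.sin_sq_le_one θ, sq_nonneg (Real.sin θ), sq_nonneg x]
    have hb2 : (0:ℝ) < 1 - b^2 := by nlinarith
    have hsq : Real.sqrt (1 - b^2) ≤ Real.sqrt (1 - x^2 * Real.sin θ^2) :=
      Real.sqrt_le_sqrt hub
    have hsqb : 0 < Real.sqrt (1 - b^2) := Real.sqrt_pos.2 hb2
    rw [Real.norm_eq_abs, abs_div]
    apply div_le_div₀ (by positivity)
    · rw [abs_neg, abs_mul]
      calc |x| * |Real.sin θ^2| ≤ b * 1 := by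
            apply mul_le_mul hxb _ (abs_nonneg _) hb0.le
            rw [abs_of_nonneg (sq_nonneg _)]; exact Real.sin_sq_le_one θ
        _ = b := mul_one b
    · positivity
    · rw [abs_of_nonneg (by positivity)]
      exact hsq
  · exact intervalIntegrable_const
  · filter_upwards with θ _ x hx
    exact hasDerivAt_Delta (u_pos (hball x hx).2 θ)

lemma hasDerivAt_EllK {k : ℝ} (hk : k ∈ Set.Ioo (0:ℝ) 1) :
    HasDerivAt EllK ((EllE k / (1 - k^2) - EllK k) / k) k := by
  obtain ⟨hk0, hk1⟩ := hk
  have hk2 : k^2 < 1 := by nlinarith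
  have h := hasDerivAt_EllK_int ⟨hk0, hk1⟩
  have heq : (∫ θ in (0:ℝ)..(π/2), k * Real.sin θ^2 / Real.sqrt (1 - k^2 * Real.sin θ^2)^3)
      = (EllE k / (1 - k^2) - EllK k) / k := by
    have hptwise : ∀ θ ∈ Set.uIcc (0:ℝ) (π/2),
        k * Real.sin θ^2 / Real.sqrt (1 - k^2 * Real.sin θ^2)^3
          = (1/k) * (1 / Real.sqrt (1 - k^2*Real.sin θ^2)^3
              - 1 / Real.sqrt (1 - k^2*Real.sin θ^2)) := by
      intro θ _
      have hu := u_pos hk2 θ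
      have hs : Real.sqrt (1 - k^2 * Real.sin θ^2) > 0 := Real.sqrt_pos.2 hu
      have hsq : Real.sqrt (1 - k^2 * Real.sin θ^2)^2 = 1 - k^2 * Real.sin θ^2 :=
        Real.sq_sqrt hu.le
      have h3 : Real.sqrt (1 - k^2*Real.sin θ^2)^3
          = (1 - k^2*Real.sin θ^2) * Real.sqrt (1 - k^2*Real.sin θ^2) := by
        rw [pow_succ, hsq]
      rw [h3]
      field_simp
      ring
    rw [intervalIntegral.integral_congr hptwise, intervalIntegral.integral_const_mul,
      intervalIntegral.integral_sub ((contInv3 hk2).intervalIntegrable _ _)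
        ((contInv hk2).intervalIntegrable _ _), integral_inv3 hk2]
    rw [show (∫ θ in (0:ℝ)..(π/2), 1 / Real.sqrt (1 - k^2*Real.sin θ^2)) = EllK k from rfl]
    field_simp
  rwa [heq] at h

lemma hasDerivAt_EllE {k : ℝ} (hk : k ∈ Set.Ioo (0:ℝ) 1) :
    HasDerivAt EllE ((EllE k - EllK k) / k) k := by
  obtain ⟨hk0, hk1⟩ := hk
  have hk2 : k^2 < 1 := by nlinarith
  have h := hasDerivAt_EllE_int ⟨hk0, hk1⟩
  have heq : (∫ θ in (0:ℝ)..(π/2), -(k * Real.sin θ^2) / Real.sqrt (1 - k^2 * Real.sin θ^2))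
      = (EllE k - EllK k) / k := by
    have hptwise : ∀ θ ∈ Set.uIcc (0:ℝ) (π/2),
        -(k * Real.sin θ^2) / Real.sqrt (1 - k^2 * Real.sin θ^2)
          = (-(1/k)) * (k^2 * Real.sin θ^2 / Real.sqrt (1 - k^2*Real.sin θ^2)) := by
      intro θ _
      have hu := u_pos hk2 θ
      have hs : Real.sqrt (1 - k^2 * Real.sin θ^2) > 0 := Real.sqrt_pos.2 hu
      field_simp
    rw [intervalIntegral.integral_congr hptwise, intervalIntegral.integral_const_mul,
      EllK_sub_EllE hk2]
    field_simp
    ring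
  rwa [heq] at h

end ellMain

section ellMain2
open MeasureTheory intervalIntegral Metric

noncomputable def Leg (k : ℝ) : ℝ :=
  EllE k * EllK' k + EllE' k * EllK k - EllK k * EllK' k

lemma sqrt_one_sub_sq_mem {k : ℝ} (hk : k ∈ Set.Ioo (0:ℝ) 1) :
    Real.sqrt (1 - k^2) ∈ Set.Ioo (0:ℝ) 1 := by
  obtain ⟨hk0, hk1⟩ := hk
  constructor
  · exact Real.sqrt_pos.2 (by nlinarith)
  · have := Real.sqrt_lt_sqrt (by nlinarith : (0:ℝ) ≤ 1 - k^2) (by nlinarith : 1 - k^2 < 1)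
    simpa using this

lemma hasDerivAt_sqrt_one_sub_sq {k : ℝ} (hk : k ∈ Set.Ioo (0:ℝ) 1) :
    HasDerivAt (fun x : ℝ => Real.sqrt (1 - x^2)) (-k / Real.sqrt (1 - k^2)) k := by
  obtain ⟨hk0, hk1⟩ := hk
  have hpos : (0:ℝ) < 1 - k^2 := by nlinarith
  have h1 : HasDerivAt (fun x : ℝ => 1 - x^2) (-(2*k)) k := by
    simpa using ((hasDerivAt_pow 2 k).const_sub 1)
  have h2 := (Real.hasDerivAt_sqrt hpos.ne').comp k h1
  refine HasDerivAt.congr_deriv h2 ?_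
  have hs : Real.sqrt (1 - k^2) > 0 := Real.sqrt_pos.2 hpos
  field_simp

lemma hasDerivAt_EllK' {k : ℝ} (hk : k ∈ Set.Ioo (0:ℝ) 1) :
    HasDerivAt EllK' (-(EllE' k - k^2 * EllK' k) / (k * (1 - k^2))) k := by
  obtain ⟨hk0, hk1⟩ := hk
  have hm := sqrt_one_sub_sq_mem ⟨hk0, hk1⟩
  have hpos : (0:ℝ) < 1 - k^2 := by nlinarith
  have hm2 : Real.sqrt (1 - k^2)^2 = 1 - k^2 := Real.sq_sqrt hpos.le
  have h1 := (hasDerivAt_EllK hm).comp k (hasDerivAt_sqrt_one_sub_sq ⟨hk0, hk1⟩)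
  have h2 : HasDerivAt EllK'
      (((EllE (Real.sqrt (1 - k^2)) / (1 - Real.sqrt (1 - k^2)^2) - EllK (Real.sqrt (1 - k^2)))
        / Real.sqrt (1 - k^2)) * (-k / Real.sqrt (1 - k^2))) k := h1
  convert h2 using 1
  rw [hm2]
  rw [show EllE (Real.sqrt (1 - k^2)) = EllE' k from rfl,
    show EllK (Real.sqrt (1 - k^2)) = EllK' k from rfl]
  have hm0 : Real.sqrt (1 - k^2) ≠ 0 := hm.1.ne'
  have hk2 : (1:ℝ) - k^2 ≠ 0 := hpos.ne'
  field_simp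
  linear_combination (-(k^2) * (EllE' k - k^2 * EllK' k)) * hm2

lemma hasDerivAt_EllE' {k : ℝ} (hk : k ∈ Set.Ioo (0:ℝ) 1) :
    HasDerivAt EllE' (-(k * (EllE' k - EllK' k)) / (1 - k^2)) k := by
  obtain ⟨hk0, hk1⟩ := hk
  have hm := sqrt_one_sub_sq_mem ⟨hk0, hk1⟩
  have hpos : (0:ℝ) < 1 - k^2 := by nlinarith
  have hm2 : Real.sqrt (1 - k^2)^2 = 1 - k^2 := Real.sq_sqrt hpos.le
  have h1 := (hasDerivAt_EllE hm).comp k (hasDerivAt_sqrt_one_sub_sq ⟨hk0, hk1⟩)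
  have h2 : HasDerivAt EllE'
      (((EllE (Real.sqrt (1 - k^2)) - EllK (Real.sqrt (1 - k^2)))
        / Real.sqrt (1 - k^2)) * (-k / Real.sqrt (1 - k^2))) k := h1
  convert h2 using 1
  rw [show EllE (Real.sqrt (1 - k^2)) = EllE' k from rfl,
    show EllK (Real.sqrt (1 - k^2)) = EllK' k from rfl]
  have hmm : Real.sqrt (1 - k^2) * Real.sqrt (1 - k^2) = 1 - k^2 :=
    Real.mul_self_sqrt hpos.le
  rw [div_mul_div_comm, hmm]
  ring

lemma hasDerivAt_Leg {k : ℝ} (hk : k ∈ Set.Ioo (0:ℝ) 1) :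
    HasDerivAt Leg 0 k := by
  obtain ⟨hk0, hk1⟩ := hk
  have hpos : (0:ℝ) < 1 - k^2 := by nlinarith
  have hE := hasDerivAt_EllE ⟨hk0, hk1⟩
  have hK := hasDerivAt_EllK ⟨hk0, hk1⟩
  have hE' := hasDerivAt_EllE' ⟨hk0, hk1⟩
  have hK' := hasDerivAt_EllK' ⟨hk0, hk1⟩
  have h := ((hE.mul hK').add (hE'.mul hK)).sub (hK.mul hK')
  refine HasDerivAt.congr_deriv h ?_
  field_simp
  ring

lemma EllK_ge {k : ℝ} (hk : k^2 < 1) : π/2 ≤ EllK k := by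
  have h0 : (π/2 : ℝ) = ∫ _ in (0:ℝ)..(π/2), (1:ℝ) := by simp
  rw [h0, EllK]
  apply intervalIntegral.integral_mono_on (by positivity)
    intervalIntegrable_const ((contInv hk).intervalIntegrable _ _)
  intro θ _
  have hu := u_pos hk θ
  have hs : Real.sqrt (1 - k^2 * Real.sin θ^2) > 0 := Real.sqrt_pos.2 hu
  rw [le_div_iff₀ hs, one_mul]
  exact Real.sqrt_le_one.mpr (by nlinarith [sq_nonneg k, sq_nonneg (Real.sin θ)] : 1 - k^2 * Real.sin θ^2 ≤ 1)

lemma EllK_pos {k : ℝ} (hk : k^2 < 1) : 0 < EllK k :=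
  lt_of_lt_of_le (by positivity) (EllK_ge hk)

end ellMain2

section ellMain3
open MeasureTheory intervalIntegral Metric Filter Topology

lemma EllE_le {k : ℝ} (hk : k^2 < 1) : EllE k ≤ π/2 := by
  have h0 : (π/2 : ℝ) = ∫ _ in (0:ℝ)..(π/2), (1:ℝ) := by simp
  rw [h0, EllE]
  apply intervalIntegral.integral_mono_on (by positivity)
    (contDelta.intervalIntegrable _ _) intervalIntegrable_const
  intro θ _
  exact Real.sqrt_le_one.mpr (by nlinarith [sq_nonneg k, sq_nonneg (Real.sin θ)])

lemma EllE_le_EllK {k : ℝ} (hk : k^2 < 1) : EllE k ≤ EllK k := by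
  rw [EllE, EllK]
  apply intervalIntegral.integral_mono_on (by positivity)
    (contDelta.intervalIntegrable _ _) ((contInv hk).intervalIntegrable _ _)
  intro θ _
  have hu := u_pos hk θ
  have hs : Real.sqrt (1 - k^2 * Real.sin θ^2) > 0 := Real.sqrt_pos.2 hu
  rw [le_div_iff₀ hs, Real.mul_self_sqrt hu.le]
  nlinarith [sq_nonneg k, sq_nonneg (Real.sin θ)]

lemma EllK_sub_EllE_le {k : ℝ} (hk0 : 0 < k) (hk1 : k < 1) :
    EllK k - EllE k ≤ (π/2) * (k^2 / Real.sqrt (1 - k^2)) := by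
  have hk2 : k^2 < 1 := by nlinarith
  have hpos : (0:ℝ) < 1 - k^2 := by nlinarith
  rw [← EllK_sub_EllE hk2]
  have h0 : (π/2) * (k^2 / Real.sqrt (1 - k^2))
      = ∫ _ in (0:ℝ)..(π/2), k^2 / Real.sqrt (1 - k^2) := by
    rw [intervalIntegral.integral_const]
    rw [smul_eq_mul]
    ring
  rw [h0]
  apply intervalIntegral.integral_mono_on (by positivity) ?_ intervalIntegrable_const
  · intro θ _
    have hu := u_pos hk2 θ
    apply div_le_div₀ (sq_nonneg k)
    · nlinarith [Real.sin_sq_le_one θ, sq_nonneg k]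
    · exact Real.sqrt_pos.2 hpos
    · exact Real.sqrt_le_sqrt (by nlinarith [Real.sin_sq_le_one θ, sq_nonneg k])
  · exact Continuous.intervalIntegrable ((continuous_const.mul (Real.continuous_sin.pow 2)).div
      contDelta (fun θ => (Real.sqrt_pos.2 (u_pos hk2 θ)).ne')) _ _

lemma EllK'_nonneg {k : ℝ} : 0 ≤ EllK' k := by
  rw [EllK', EllK]
  apply intervalIntegral.integral_nonneg (by positivity)
  intro θ _
  positivity

lemma EllK'_le {k : ℝ} (hk0 : 0 < k) (hk1 : k < 1) : EllK' k ≤ (π/2) * (1/k) := by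
  have hpos : (0:ℝ) < 1 - k^2 := by nlinarith
  have hm2 : Real.sqrt (1 - k^2)^2 = 1 - k^2 := Real.sq_sqrt hpos.le
  have hm1 : Real.sqrt (1 - k^2)^2 < 1 := by nlinarith
  rw [EllK', EllK]
  have h0 : (π/2) * (1/k) = ∫ _ in (0:ℝ)..(π/2), (1/k : ℝ) := by
    rw [intervalIntegral.integral_const]
    rw [smul_eq_mul]
    ring
  rw [h0]
  apply intervalIntegral.integral_mono_on (by positivity)
    ((contInv hm1).intervalIntegrable _ _) intervalIntegrable_const
  intro θ _
  have hu := u_pos hm1 θ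
  have hs : Real.sqrt (1 - Real.sqrt (1 - k^2)^2 * Real.sin θ^2) > 0 := Real.sqrt_pos.2 hu
  have hk' : k ≤ Real.sqrt (1 - Real.sqrt (1 - k^2)^2 * Real.sin θ^2) := by
    rw [Real.le_sqrt hk0.le hu.le, hm2]
    nlinarith [Real.sin_sq_le_one θ]
  exact one_div_le_one_div_of_le hk0 hk'

lemma EllE'_bounds {k : ℝ} (hk0 : 0 < k) (hk1 : k < 1) :
    1 ≤ EllE' k ∧ EllE' k ≤ 1 + k := by
  have hpos : (0:ℝ) < 1 - k^2 := by nlinarith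
  have hm2 : Real.sqrt (1 - k^2)^2 = 1 - k^2 := Real.sq_sqrt hpos.le
  constructor
  · have h0 : (1:ℝ) = ∫ θ in (0:ℝ)..(π/2), Real.cos θ := by
      rw [integral_cos]; simp
    rw [h0, EllE', EllE]
    apply intervalIntegral.integral_mono_on (by positivity)
      (Real.continuous_cos.intervalIntegrable _ _) (contDelta.intervalIntegrable _ _)
    intro θ hθ
    have hcos : 0 ≤ Real.cos θ :=
      Real.cos_nonneg_of_mem_Icc ⟨by linarith [hθ.1, Real.pi_pos], hθ.2⟩
    have hu : (0:ℝ) ≤ 1 - Real.sqrt (1 - k^2)^2 * Real.sin θ^2 := (u_pos (by nlinarith) θ).le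
    rw [Real.le_sqrt hcos hu]
    have hsc := Real.sin_sq_add_cos_sq θ
    nlinarith [Real.sin_sq_le_one θ, sq_nonneg (Real.sin θ)]
  · have h0 : (1:ℝ) + k = ∫ θ in (0:ℝ)..(π/2), (Real.cos θ + k * Real.sin θ) := by
      rw [intervalIntegral.integral_add (Real.continuous_cos.intervalIntegrable _ _)
        ((Real.continuous_sin.intervalIntegrable _ _).const_mul _),
        integral_cos, intervalIntegral.integral_const_mul, integral_sin]
      simp
    rw [h0, EllE', EllE]
    apply intervalIntegral.integral_mono_on (by positivity)
      (contDelta.intervalIntegrable _ _)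
      ((Real.continuous_cos.add (continuous_const.mul Real.continuous_sin)).intervalIntegrable _ _)
    intro θ hθ
    have hcos : 0 ≤ Real.cos θ :=
      Real.cos_nonneg_of_mem_Icc ⟨by linarith [hθ.1, Real.pi_pos], hθ.2⟩
    have hsin : 0 ≤ Real.sin θ :=
      Real.sin_nonneg_of_nonneg_of_le_pi hθ.1 (by linarith [hθ.2, Real.pi_pos])
    have hsc := Real.sin_sq_add_cos_sq θ
    have h1 : 1 - Real.sqrt (1 - k^2)^2 * Real.sin θ^2 ≤ (Real.cos θ + k * Real.sin θ)^2 := by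
      nlinarith [hm2, mul_nonneg (mul_nonneg hk0.le hsin) hcos]
    calc Real.sqrt (1 - Real.sqrt (1 - k^2)^2 * Real.sin θ^2)
        ≤ Real.sqrt ((Real.cos θ + k * Real.sin θ)^2) := Real.sqrt_le_sqrt h1
      _ = Real.cos θ + k * Real.sin θ := Real.sqrt_sq (by positivity)

end ellMain3

section ellMain4
open MeasureTheory intervalIntegral Metric Filter Topology

lemma tendsto_EllK : Tendsto EllK (𝓝[>] (0:ℝ)) (𝓝 (π/2)) := by
  have hmem : Set.Ioo (0:ℝ) 1 ∈ 𝓝[>] (0:ℝ) :=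
    Ioo_mem_nhdsGT_of_mem ⟨le_refl 0, one_pos⟩
  apply tendsto_of_tendsto_of_tendsto_of_le_of_le'
    (g := fun _ => (π/2 : ℝ)) (h := fun k => π/2 + (π/2) * (k^2 / Real.sqrt (1 - k^2)))
  · exact tendsto_const_nhds
  · have hco : ContinuousAt (fun k : ℝ => π/2 + (π/2) * (k^2 / Real.sqrt (1 - k^2))) 0 := by
      apply ContinuousAt.add continuousAt_const
      apply ContinuousAt.mul continuousAt_const
      apply ContinuousAt.div (by fun_prop) (by fun_prop)
      simp
    have := hco.tendsto.mono_left (nhdsWithin_le_nhds (s := Set.Ioi (0:ℝ)))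
    simpa using this
  · filter_upwards [hmem] with x hx
    exact EllK_ge (by nlinarith [hx.1, hx.2])
  · filter_upwards [hmem] with x hx
    have h1 := EllK_sub_EllE_le hx.1 hx.2
    have h2 := EllE_le (show x^2 < 1 by nlinarith [hx.1, hx.2])
    linarith

lemma tendsto_EllE' : Tendsto EllE' (𝓝[>] (0:ℝ)) (𝓝 1) := by
  have hmem : Set.Ioo (0:ℝ) 1 ∈ 𝓝[>] (0:ℝ) :=
    Ioo_mem_nhdsGT_of_mem ⟨le_refl 0, one_pos⟩
  apply tendsto_of_tendsto_of_tendsto_of_le_of_le'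
    (g := fun _ => (1:ℝ)) (h := fun k => 1 + k)
  · exact tendsto_const_nhds
  · have hco : ContinuousAt (fun k : ℝ => 1 + k) 0 := by fun_prop
    have h2 := hco.tendsto.mono_left (nhdsWithin_le_nhds (s := Set.Ioi (0:ℝ)))
    simpa using h2
  · filter_upwards [hmem] with x hx
    exact (EllE'_bounds hx.1 hx.2).1
  · filter_upwards [hmem] with x hx
    exact (EllE'_bounds hx.1 hx.2).2

lemma tendsto_EllK'_mul : Tendsto (fun k => EllK' k * (EllE k - EllK k)) (𝓝[>] (0:ℝ)) (𝓝 0) := by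
  have hmem : Set.Ioo (0:ℝ) 1 ∈ 𝓝[>] (0:ℝ) :=
    Ioo_mem_nhdsGT_of_mem ⟨le_refl 0, one_pos⟩
  apply tendsto_of_tendsto_of_tendsto_of_le_of_le'
    (g := fun k : ℝ => -((π^2/4) * (k / Real.sqrt (1 - k^2)))) (h := fun _ => (0:ℝ))
  · have hco : ContinuousAt (fun k : ℝ => -((π^2/4) * (k / Real.sqrt (1 - k^2)))) 0 := by
      apply ContinuousAt.neg
      apply ContinuousAt.mul continuousAt_const
      apply ContinuousAt.div (by fun_prop) (by fun_prop)
      simp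
    have := hco.tendsto.mono_left (nhdsWithin_le_nhds (s := Set.Ioi (0:ℝ)))
    simpa using this
  · exact tendsto_const_nhds
  · filter_upwards [hmem] with x hx
    have hx2 : x^2 < 1 := by nlinarith [hx.1, hx.2]
    have hA := EllK'_le hx.1 hx.2
    have hA0 := EllK'_nonneg (k := x)
    have hB := EllK_sub_EllE_le hx.1 hx.2
    have hB0 : 0 ≤ EllK x - EllE x := by linarith [EllE_le_EllK hx2]
    have hmul : EllK' x * (EllK x - EllE x)
        ≤ ((π/2) * (1/x)) * ((π/2) * (x^2 / Real.sqrt (1 - x^2))) :=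
      mul_le_mul hA hB hB0 (mul_nonneg (by positivity) (one_div_nonneg.mpr hx.1.le))
    have hAB : ((π/2) * (1/x)) * ((π/2) * (x^2 / Real.sqrt (1 - x^2)))
        = (π^2/4) * (x / Real.sqrt (1 - x^2)) := by
      have hx0 : x ≠ 0 := ne_of_gt hx.1
      field_simp
      linear_combination (0:ℝ) * (mul_inv_cancel₀ hx0)
    rw [hAB] at hmul
    nlinarith [hmul]
  · filter_upwards [hmem] with x hx
    have hx2 : x^2 < 1 := by nlinarith [hx.1, hx.2]
    have hB0 : EllE x - EllK x ≤ 0 := by linarith [EllE_le_EllK hx2]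
    exact mul_nonpos_of_nonneg_of_nonpos EllK'_nonneg hB0

lemma tendsto_Leg : Tendsto Leg (𝓝[>] (0:ℝ)) (𝓝 (π/2)) := by
  have h := tendsto_EllK'_mul.add (tendsto_EllE'.mul tendsto_EllK)
  have heq : ∀ x : ℝ, EllK' x * (EllE x - EllK x) + EllE' x * EllK x = Leg x := by
    intro x; rw [Leg]; ring
  simp only [heq] at h
  simpa using h

lemma Leg_eq {k : ℝ} (hk : k ∈ Set.Ioo (0:ℝ) 1) : Leg k = π/2 := by
  have hconst : ∀ x ∈ Set.Ioo (0:ℝ) 1, ∀ y ∈ Set.Ioo (0:ℝ) 1, x < y → Leg x = Leg y := by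
    intro x hx y hy hxy
    have hIcc : Set.Icc x y ⊆ Set.Ioo (0:ℝ) 1 :=
      fun z hz => ⟨lt_of_lt_of_le hx.1 hz.1, lt_of_le_of_lt hz.2 hy.2⟩
    obtain ⟨c, _, hc2⟩ := exists_hasDerivAt_eq_slope Leg (fun _ => 0) hxy
      (fun z hz => (hasDerivAt_Leg (hIcc hz)).continuousAt.continuousWithinAt)
      (fun z hz => hasDerivAt_Leg (hIcc (Set.Ioo_subset_Icc_self hz)))
    have hxy' : y - x ≠ 0 := by linarith
    field_simp at hc2
    linarith [hc2]
  have hev : Leg =ᶠ[𝓝[>] (0:ℝ)] (fun _ => Leg k) := by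
    filter_upwards [Ioo_mem_nhdsGT_of_mem (⟨le_refl (0:ℝ), hk.1⟩ : (0:ℝ) ∈ Set.Ico 0 k)]
      with x hx
    exact hconst x ⟨hx.1, hx.2.trans hk.2⟩ k hk hx.2
  exact tendsto_nhds_unique (tendsto_const_nhds.congr' hev.symm) tendsto_Leg

end ellMain4

theorem stmt_8 (k : ℝ) (hk : k ∈ Set.Ioo (0:ℝ) 1) :
    HasDerivAt (fun k => EllK' k / EllK k)
      (-π / (2 * k * Real.sqrt (1 - k^2) ^ 2 * EllK k ^ 2)) k := by
  obtain ⟨hk0, hk1⟩ := hk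
  have hk2 : k^2 < 1 := by nlinarith
  have hpos : (0:ℝ) < 1 - k^2 := by nlinarith
  have hm2 : Real.sqrt (1 - k^2)^2 = 1 - k^2 := Real.sq_sqrt hpos.le
  have hKpos := EllK_pos hk2
  have hd := (hasDerivAt_EllK' ⟨hk0, hk1⟩).div (hasDerivAt_EllK ⟨hk0, hk1⟩) hKpos.ne'
  refine HasDerivAt.congr_deriv hd ?_
  have hLeg := Leg_eq ⟨hk0, hk1⟩
  rw [Leg] at hLeg
  rw [hm2]
  field_simp
  linear_combination (-2) * hLeg
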